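/- Let k ≥ 4, r ≥ 1 and α be integers with 1 ≤ α < kr, and let m ∈ [1,k] be the integer such that (m−1)r ≤ α < mr. Let A = {a_1 < a_2 < ⋯ < a_k} be a set of k nonnegative integers with 0 ∈ A. Then |Σ_α(𝔸)| ≥ r·k·(k−1)/2 − r·m·(m−1)/2 + (m−1)·(mr − α) + 1, where 𝔸 = (a_1,…,a_k)_r. -/

import Mathlib

open Finset

/-- The set `Σ_α(𝔸)` of sums of subsequences with at least `α` terms of the sequence
in which every element of `A` is repeated exactly `r` times. -/
def SubseqSums (r : ℕ) (A : Finset ℤ) (α : ℕ) : Set ℤ :=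
  {x | ∃ lam : ℤ → ℕ, (∀ a, lam a ≤ r) ∧ (∀ a ∉ A, lam a = 0) ∧
    α ≤ (∑ a ∈ A, lam a) ∧ (∑ a ∈ A, (lam a : ℤ) * a) = x}

lemma mem_subseqSums_of (r α k : ℕ) (A : Finset ℤ) (a : ℕ → ℤ)
    (hAcard : A.card = k) (hmem : ∀ t, t < k → a t ∈ A)
    (hinj : ∀ t₁, t₁ < k → ∀ t₂, t₂ < k → a t₁ = a t₂ → t₁ = t₂)
    (μ : ℕ → ℕ) (hμr : ∀ t, t < k → μ t ≤ r)
    (hμα : α ≤ ∑ t ∈ range k, μ t) :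
    (∑ t ∈ range k, (μ t : ℤ) * a t) ∈ SubseqSums r A α := by
  classical
  set lam : ℤ → ℕ := fun x => ∑ t ∈ range k, if a t = x then μ t else 0 with hlam
  have hA_eq : A = (range k).image a := by
    apply (Finset.eq_of_subset_of_card_le _ _).symm
    · intro x hx
      obtain ⟨t, ht, rfl⟩ := Finset.mem_image.mp hx
      exact hmem t (mem_range.mp ht)
    · rw [Finset.card_image_of_injOn, Finset.card_range, hAcard]
      intro t₁ h₁ t₂ h₂ h
      exact hinj t₁ (mem_range.mp h₁) t₂ (mem_range.mp h₂) h
  have hlam_at : ∀ t, t < k → lam (a t) = μ t := by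
    intro t ht
    rw [hlam]
    refine Finset.sum_eq_single_of_mem t (mem_range.mpr ht) ?_ |>.trans (if_pos rfl)
    intro b hb hbt
    rw [if_neg]
    intro h
    exact hbt (hinj b (mem_range.mp hb) t ht h)
  refine ⟨lam, ?_, ?_, ?_, ?_⟩
  · intro x
    by_cases hx : ∃ t, t < k ∧ a t = x
    · obtain ⟨t, ht, rfl⟩ := hx
      rw [hlam_at t ht]; exact hμr t ht
    · have : lam x = 0 := by
        rw [hlam]
        refine Finset.sum_eq_zero fun t ht => ?_
        rw [if_neg fun h => hx ⟨t, mem_range.mp ht, h⟩]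
      omega
  · intro x hx
    rw [hlam]
    refine Finset.sum_eq_zero fun t ht => ?_
    rw [if_neg]
    intro h
    exact hx (h ▸ hmem t (mem_range.mp ht))
  · rw [hA_eq, Finset.sum_image fun t₁ h₁ t₂ h₂ h =>
      hinj t₁ (mem_range.mp h₁) t₂ (mem_range.mp h₂) h]
    calc α ≤ ∑ t ∈ range k, μ t := hμα
    _ = ∑ t ∈ range k, lam (a t) :=
      Finset.sum_congr rfl fun t ht => (hlam_at t (mem_range.mp ht)).symm
  · rw [hA_eq, Finset.sum_image fun t₁ h₁ t₂ h₂ h =>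
      hinj t₁ (mem_range.mp h₁) t₂ (mem_range.mp h₂) h]
    exact (Finset.sum_congr rfl fun t ht => by
      rw [hlam_at t (mem_range.mp ht)]).symm

theorem stmt_18 (k r α m : ℕ) (A : Finset ℤ)
    (hk : 4 ≤ k) (hr : 1 ≤ r) (hα1 : 1 ≤ α) (hαkr : α < k * r)
    (hm1 : 1 ≤ m) (hmk : m ≤ k) (hmα : (m - 1) * r ≤ α) (hαm : α < m * r)
    (hAcard : A.card = k) (hAnonneg : ∀ a ∈ A, 0 ≤ a) (h0A : (0 : ℤ) ∈ A) :
    r * k * (k - 1) / 2 - r * m * (m - 1) / 2 + (m - 1) * (m * r - α) + 1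
      ≤ (SubseqSums r A α).ncard := by
  classical
  obtain ⟨m', rfl⟩ : ∃ m', m = m' + 1 := ⟨m - 1, by omega⟩
  simp only [Nat.add_sub_cancel] at hmα ⊢
  have hm'k : m' < k := by omega
  have hmr : (m' + 1) * r = m' * r + r := by ring
  -- the increasing enumeration of A
  set a : ℕ → ℤ := fun t => if h : t < k then A.orderEmbOfFin hAcard ⟨t, h⟩ else 0 with ha
  have hamem : ∀ t, t < k → a t ∈ A := by
    intro t ht
    simp only [ha, dif_pos ht]
    exact A.orderEmbOfFin_mem hAcard _
  have hamono : ∀ t₁ t₂, t₁ < t₂ → t₂ < k → a t₁ < a t₂ := by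
    intro t₁ t₂ h hk2
    have h1 : t₁ < k := lt_trans h hk2
    simp only [ha, dif_pos h1, dif_pos hk2]
    exact (A.orderEmbOfFin hAcard).strictMono (by exact h)
  have hannneg : ∀ t, t < k → 0 ≤ a t := fun t ht => hAnonneg _ (hamem t ht)
  have hainj : ∀ t₁, t₁ < k → ∀ t₂, t₂ < k → a t₁ = a t₂ → t₁ = t₂ := by
    intro t₁ h₁ t₂ h₂ h
    rcases lt_trichotomy t₁ t₂ with hlt | heq | hlt
    · exact absurd h (ne_of_lt (hamono _ _ hlt h₂))
    · exact heq
    · exact absurd h.symm (ne_of_lt (hamono _ _ hlt h₁))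
  set s : ℕ := α - m' * r with hs
  have hs1 : m' * r + s = α := by omega
  have hsr : s < r := by omega
  set D : ℕ → ℕ := fun j => if j = m' then s else 0 with hD
  set C : ℕ → ℕ := fun j => if j = m' then r - s else r with hC
  have hDC : ∀ j, D j + C j = r := by
    intro j
    simp only [hD, hC]
    split <;> omega
  set F : ℕ → ℕ → ℕ → ℤ := fun j c i =>
    (r : ℤ) * (∑ t ∈ range j, a t) + ((D j + c + 1 : ℕ) : ℤ) * a j - a i with hF
  set M0 : ℤ := (r : ℤ) * (∑ t ∈ range m', a t) + (s : ℤ) * a m' with hM0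
  -- basic bounds
  have hBmono : ∀ j₁ j₂, j₁ ≤ j₂ → j₂ ≤ k →
      (r : ℤ) * (∑ t ∈ range j₁, a t) ≤ (r : ℤ) * (∑ t ∈ range j₂, a t) := by
    intro j₁ j₂ h12 h2k
    apply mul_le_mul_of_nonneg_left _ (by positivity)
    apply Finset.sum_le_sum_of_subset_of_nonneg (Finset.range_subset_range.mpr h12)
    intro t ht _
    exact hannneg t (lt_of_lt_of_le (mem_range.mp ht) h2k)
  have hFlow : ∀ j c i, j < k → i < j →
      (r : ℤ) * (∑ t ∈ range j, a t) < F j c i := by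
    intro j c i hjk hij
    have h1 : a i < a j := hamono i j hij hjk
    have h0 : (1 : ℤ) ≤ ((D j + c + 1 : ℕ) : ℤ) := by
      exact_mod_cast (by omega : 1 ≤ D j + c + 1)
    have h2 : a j ≤ ((D j + c + 1 : ℕ) : ℤ) * a j :=
      le_mul_of_one_le_left (hannneg j hjk) h0
    simp only [hF]
    linarith
  have hFhigh : ∀ j c i, j < k → c < C j → i < j →
      F j c i ≤ (r : ℤ) * (∑ t ∈ range (j + 1), a t) := by
    intro j c i hjk hc hij
    rw [Finset.sum_range_succ, mul_add]
    have h1 : ((D j + c + 1 : ℕ) : ℤ) ≤ (r : ℤ) := by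
      exact_mod_cast (by have := hDC j; omega : D j + c + 1 ≤ r)
    have h2 : ((D j + c + 1 : ℕ) : ℤ) * a j ≤ (r : ℤ) * a j :=
      mul_le_mul_of_nonneg_right h1 (hannneg j hjk)
    have h3 : 0 ≤ a i := hannneg i (lt_trans hij hjk)
    simp only [hF]
    linarith
  have hltc : ∀ j c c' i i', j < k → i < j → i' < j → c < c' →
      F j c i < F j c' i' := by
    intro j c c' i i' hjk hij hij' hcc
    have h1 : a i' < a j := hamono i' j hij' hjk
    have h2 : 0 ≤ a i := hannneg i (lt_trans hij hjk)
    have h3 : ((D j + c + 1 : ℕ) : ℤ) * a j ≤ ((D j + c' : ℕ) : ℤ) * a j :=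
      mul_le_mul_of_nonneg_right
        (by exact_mod_cast (by omega : D j + c + 1 ≤ D j + c')) (hannneg j hjk)
    have h4 : ((D j + c' + 1 : ℕ) : ℤ) * a j = ((D j + c' : ℕ) : ℤ) * a j + a j := by
      push_cast; ring
    simp only [hF]
    linarith
  have hM0lt : ∀ j c i, m' ≤ j → j < k → i < j → M0 < F j c i := by
    intro j c i hmj hjk hij
    rcases eq_or_lt_of_le hmj with heq | hmj
    · obtain rfl : j = m' := heq.symm
      have h1 : a i < a j := hamono i j hij hjk
      have h2 : D j = s := if_pos rfl
      have h3 : ((D j + c + 1 : ℕ) : ℤ) * a j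
          = (s : ℤ) * a j + ((c : ℤ) + 1) * a j := by
        rw [h2]; push_cast; ring
      have h4 : a j ≤ ((c : ℤ) + 1) * a j :=
        le_mul_of_one_le_left (hannneg j hjk) (by omega)
      simp only [hF, hM0]
      linarith
    · have h1 : M0 ≤ (r : ℤ) * (∑ t ∈ range (m' + 1), a t) := by
        rw [Finset.sum_range_succ, mul_add]
        have : (s : ℤ) * a m' ≤ (r : ℤ) * a m' :=
          mul_le_mul_of_nonneg_right (by exact_mod_cast hsr.le) (hannneg m' hm'k)
        simp only [hM0]
        linarith
      calc M0 ≤ (r : ℤ) * (∑ t ∈ range (m' + 1), a t) := h1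
        _ ≤ (r : ℤ) * (∑ t ∈ range j, a t) := hBmono _ _ hmj hjk.le
        _ < F j c i := hFlow j c i hjk hij
  set I : Finset ((_ : ℕ) × ℕ × ℕ) :=
    (Finset.Ico m' k).sigma (fun j => (range (C j)) ×ˢ (range j)) with hI
  have hImem : ∀ p : (_ : ℕ) × ℕ × ℕ, p ∈ I ↔
      (m' ≤ p.1 ∧ p.1 < k) ∧ p.2.1 < C p.1 ∧ p.2.2 < p.1 := by
    intro p
    simp [hI, Finset.mem_sigma, Finset.mem_product, Finset.mem_Ico, Finset.mem_range,
      and_assoc]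
  set G : Finset ℤ := I.image (fun p => F p.1 p.2.1 p.2.2) with hG
  have hinjF : ∀ p ∈ I, ∀ q ∈ I, F p.1 p.2.1 p.2.2 = F q.1 q.2.1 q.2.2 → p = q := by
    rintro ⟨j, c, i⟩ hp ⟨j', c', i'⟩ hq h
    rw [hImem] at hp hq
    obtain ⟨⟨hpm, hpk⟩, hpc, hpi⟩ := hp
    obtain ⟨⟨hqm, hqk⟩, hqc, hqi⟩ := hq
    rcases lt_trichotomy j j' with hj | rfl | hj
    · exfalso
      have : F j c i < F j' c' i' :=
        calc F j c i ≤ (r : ℤ) * (∑ t ∈ range (j + 1), a t) := hFhigh j c i hpk hpc hpi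
          _ ≤ (r : ℤ) * (∑ t ∈ range j', a t) := hBmono _ _ hj hqk.le
          _ < F j' c' i' := hFlow j' c' i' hqk hqi
      exact absurd h (ne_of_lt this)
    · rcases lt_trichotomy c c' with hc | rfl | hc
      · exact absurd h (ne_of_lt (hltc j c c' i i' hpk hpi hqi hc))
      · have : a i = a i' := by
          simp only [hF] at h
          linarith
        have := hainj i (lt_trans hpi hpk) i' (lt_trans hqi hpk) this
        subst this
        rfl
      · exact absurd h.symm (ne_of_lt (hltc j c' c i' i hpk hqi hpi hc))
    · exfalso
      have : F j' c' i' < F j c i :=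
        calc F j' c' i' ≤ (r : ℤ) * (∑ t ∈ range (j' + 1), a t) := hFhigh j' c' i' hqk hqc hqi
          _ ≤ (r : ℤ) * (∑ t ∈ range j, a t) := hBmono _ _ hj hpk.le
          _ < F j c i := hFlow j c i hpk hpi
      exact absurd h (ne_of_gt this)
  have hGcard : G.card = I.card := by
    rw [hG]
    apply Finset.card_image_of_injOn
    intro p hp q hq h
    exact hinjF p (by exact_mod_cast hp) q (by exact_mod_cast hq) h
  have hM0G : M0 ∉ G := by
    intro hmem
    rw [hG, Finset.mem_image] at hmem
    obtain ⟨p, hp, hEq⟩ := hmem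
    rw [hImem] at hp
    have := hM0lt p.1 p.2.1 p.2.2 hp.1.1 hp.1.2 hp.2.2
    exact (ne_of_lt this) hEq.symm
  set T : Finset ℤ := insert M0 G with hT
  have hTcard : T.card = I.card + 1 := by
    rw [hT, Finset.card_insert_of_notMem hM0G, hGcard]
  -- membership of T in SubseqSums
  have hTsub : ↑T ⊆ SubseqSums r A α := by
    intro x hx
    rw [hT] at hx
    simp only [Finset.coe_insert, Set.mem_insert_iff, Finset.mem_coe] at hx
    rcases hx with rfl | hx
    · -- M0
      set μ0 : ℕ → ℕ := fun t => if t < m' then r else if t = m' then s else 0 with hμ0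
      have hval : (∑ t ∈ range k, (μ0 t : ℤ) * a t) = M0 := by
        rw [← Finset.sum_subset (Finset.range_subset_range.mpr (show m' + 1 ≤ k from hm'k))
          (fun t _ ht => by
            have : ¬ t < m' := fun h => ht (mem_range.mpr (by omega))
            have h2 : t ≠ m' := fun h => ht (mem_range.mpr (by omega))
            simp [hμ0, this, h2])]
        rw [Finset.sum_range_succ]
        have h1 : (μ0 m' : ℤ) = (s : ℤ) := by simp [hμ0]
        have h2 : ∑ t ∈ range m', (μ0 t : ℤ) * a t = ∑ t ∈ range m', (r : ℤ) * a t := by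
          apply Finset.sum_congr rfl
          intro t ht
          simp [hμ0, mem_range.mp ht]
        rw [h1, h2, ← Finset.mul_sum, hM0]
      have hμα' : α ≤ ∑ t ∈ range k, μ0 t := by
        have h1 : ∑ t ∈ range (m' + 1), μ0 t = m' * r + s := by
          rw [Finset.sum_range_succ]
          have h2 : ∑ t ∈ range m', μ0 t = ∑ t ∈ range m', r :=
            Finset.sum_congr rfl fun t ht => by simp [hμ0, mem_range.mp ht]
          rw [h2]; simp [hμ0, Finset.sum_const, Finset.card_range, smul_eq_mul]
        have h3 : ∑ t ∈ range (m' + 1), μ0 t ≤ ∑ t ∈ range k, μ0 t :=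
          Finset.sum_le_sum_of_subset (Finset.range_subset_range.mpr hm'k)
        omega
      rw [← hval]
      apply mem_subseqSums_of r α k A a hAcard hamem hainj μ0 _ hμα'
      intro t _
      simp only [hμ0]
      split_ifs <;> omega
    · -- the family F
      rw [hG, Finset.mem_image] at hx
      obtain ⟨⟨j, c, i⟩, hp, rfl⟩ := hx
      rw [hImem] at hp
      obtain ⟨⟨hpm, hpk⟩, hpc, hpi⟩ := hp
      replace hpm : m' ≤ j := hpm
      replace hpk : j < k := hpk
      replace hpc : c < C j := hpc
      replace hpi : i < j := hpi
      have hik : i < k := lt_trans hpi hpk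
      have hij : i ≠ j := ne_of_lt hpi
      set μ : ℕ → ℕ := fun t =>
        if t = i then r - 1 else if t = j then D j + c + 1 else if t < j then r else 0
        with hμ
      have hval : (∑ t ∈ range k, (μ t : ℤ) * a t) = F j c i := by
        have hsp : ∀ t ∈ range k, (μ t : ℤ) * a t =
            (if t = j then ((D j + c + 1 : ℕ) : ℤ) else if t < j then (r : ℤ) else 0) * a t
              - (if t = i then a t else 0) := by
          intro t _
          by_cases h1 : t = i
          · subst h1
            have hμt : μ t = r - 1 := if_pos rfl
            have hcast : ((r - 1 : ℕ) : ℤ) = (r : ℤ) - 1 := by omega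
            rw [hμt, hcast, if_neg hij, if_pos hpi, if_pos rfl]
            ring
          · simp only [hμ, if_neg h1]
            split_ifs <;> push_cast <;> ring
        rw [Finset.sum_congr rfl hsp, Finset.sum_sub_distrib]
        have h2 : ∑ t ∈ range k, (if t = i then a t else 0) = a i := by
          rw [Finset.sum_ite_eq' (range k) i a, if_pos (mem_range.mpr hik)]
        have h3 : (∑ t ∈ range k,
            (if t = j then ((D j + c + 1 : ℕ) : ℤ) else if t < j then (r : ℤ) else 0) * a t)
            = (r : ℤ) * (∑ t ∈ range j, a t) + ((D j + c + 1 : ℕ) : ℤ) * a j := by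
          rw [← Finset.sum_subset (Finset.range_subset_range.mpr (show j + 1 ≤ k from hpk))
            (fun t _ ht => by
              have h4 : t ≠ j := fun h => ht (mem_range.mpr (by omega))
              have h5 : ¬ t < j := fun h => ht (mem_range.mpr (by omega))
              simp [h4, h5])]
          rw [Finset.sum_range_succ, if_pos rfl]
          congr 1
          rw [Finset.mul_sum]
          apply Finset.sum_congr rfl
          intro t ht
          have h6 : t ≠ j := ne_of_lt (mem_range.mp ht)
          rw [if_neg h6, if_pos (mem_range.mp ht)]
        rw [h2, h3, hF]
      have hμα' : α ≤ ∑ t ∈ range k, μ t := by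
        have h1 : ∑ t ∈ range (j + 1), μ t ≤ ∑ t ∈ range k, μ t :=
          Finset.sum_le_sum_of_subset (Finset.range_subset_range.mpr hpk)
        have h2 : μ j = D j + c + 1 :=
          (if_neg (Ne.symm hij)).trans (if_pos rfl)
        have h3 : ∑ t ∈ range j, μ t = (r - 1) + (j - 1) * r := by
          rw [← Finset.add_sum_erase _ μ (mem_range.mpr hpi)]
          have h4 : μ i = r - 1 := by simp [hμ]
          have h5 : ∑ t ∈ (range j).erase i, μ t = (j - 1) * r := by
            have h6 : ∀ t ∈ (range j).erase i, μ t = r := by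
              intro t ht
              obtain ⟨hti, htj⟩ := Finset.mem_erase.mp ht
              have htj' : t < j := mem_range.mp htj
              simp [hμ, hti, ne_of_lt htj', htj']
            rw [Finset.sum_congr rfl h6, Finset.sum_const,
              Finset.card_erase_of_mem (mem_range.mpr hpi), Finset.card_range,
              smul_eq_mul]
          rw [h4, h5]
        have h7 : ∑ t ∈ range (j + 1), μ t = (r - 1) + (j - 1) * r + (D j + c + 1) := by
          rw [Finset.sum_range_succ, h2, h3]
        have h8 : (j - 1) * r + r = j * r := by
          cases j with
          | zero => omega
          | succ w => simp [Nat.succ_sub_one, Nat.succ_mul]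
        by_cases hjm : j = m'
        · subst hjm
          have h9 : D j = s := if_pos rfl
          omega
        · have h9 : D j = 0 := if_neg hjm
          have h10 : (m' + 1) * r ≤ j * r := Nat.mul_le_mul_right r (by omega)
          omega
      rw [← hval]
      apply mem_subseqSums_of r α k A a hAcard hamem hainj μ _ hμα'
      intro t _
      have := hDC j
      simp only [hμ]
      split_ifs <;> omega
  -- finiteness
  have hfin : (SubseqSums r A α).Finite := by
    apply Set.Finite.subset (Set.finite_Icc (0 : ℤ) (∑ x ∈ A, (r : ℤ) * x))
    rintro x ⟨lam, h1, _, _, h4⟩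
    constructor
    · rw [← h4]
      apply Finset.sum_nonneg
      intro y hy
      exact mul_nonneg (by positivity) (hAnonneg y hy)
    · rw [← h4]
      apply Finset.sum_le_sum
      intro y hy
      exact mul_le_mul_of_nonneg_right (by exact_mod_cast h1 y) (hAnonneg y hy)
  have hle : T.card ≤ (SubseqSums r A α).ncard := by
    rw [← Set.ncard_coe_finset T]
    exact Set.ncard_le_ncard hTsub hfin
  -- cardinality of I
  have hIcard : I.card = (r - s) * m' + r * (∑ j ∈ Finset.Ico (m' + 1) k, j) := by
    rw [hI, Finset.card_sigma]
    have h1 : ∀ j, ((range (C j)) ×ˢ (range j)).card = C j * j := by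
      intro j
      rw [Finset.card_product, Finset.card_range, Finset.card_range]
    rw [Finset.sum_congr rfl fun j _ => h1 j, Finset.sum_eq_sum_Ico_succ_bot hm'k]
    have h2 : C m' = r - s := if_pos rfl
    have h3 : ∑ j ∈ Finset.Ico (m' + 1) k, C j * j
        = r * (∑ j ∈ Finset.Ico (m' + 1) k, j) := by
      rw [Finset.mul_sum]
      apply Finset.sum_congr rfl
      intro j hj
      have : j ≠ m' := by
        have := (Finset.mem_Ico.mp hj).1
        omega
      rw [hC]
      simp [this]
    rw [h2, h3]
  -- Gauss sums and final arithmetic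
  have hP2 : (∑ t ∈ range k, t) * 2 = k * (k - 1) := Finset.sum_range_id_mul_two k
  have hQ2 : (∑ t ∈ range (m' + 1), t) * 2 = (m' + 1) * m' := by
    have := Finset.sum_range_id_mul_two (m' + 1)
    simpa using this
  have hQS : (∑ t ∈ range (m' + 1), t) + (∑ j ∈ Finset.Ico (m' + 1) k, j)
      = ∑ t ∈ range k, t := by
    rw [Finset.range_eq_Ico, Finset.range_eq_Ico]
    exact Finset.sum_Ico_consecutive (fun i => i) (Nat.zero_le _) (show m' + 1 ≤ k from hm'k)
  set P := ∑ t ∈ range k, t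
  set Q := ∑ t ∈ range (m' + 1), t
  set SS := ∑ j ∈ Finset.Ico (m' + 1) k, j
  have e1 : r * k * (k - 1) / 2 = r * P := by
    have : r * k * (k - 1) = (r * P) * 2 := by rw [mul_assoc, ← hP2]; ring
    rw [this, Nat.mul_div_cancel _ (by norm_num)]
  have e2 : r * (m' + 1) * m' / 2 = r * Q := by
    have : r * (m' + 1) * m' = (r * Q) * 2 := by rw [mul_assoc, ← hQ2]; ring
    rw [this, Nat.mul_div_cancel _ (by norm_num)]
  have e3 : (m' + 1) * r - α = r - s := by omega
  have e4 : r * Q + r * SS = r * P := by rw [← Nat.mul_add, hQS]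
  have e5 : m' * (r - s) = (r - s) * m' := Nat.mul_comm _ _
  rw [e1, e2, e3]
  omega
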